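/- arXiv:1612.04586 — 3 statements merged into one kernel-verified Lean document; each statement's English description precedes it below -/
import Mathlib

section
/- With the notation and hypotheses of the rational-solution setup below, one has the direct sum decomposition 𝔤((z)) = 𝔤[[z]] ∔ W, i.e. 𝔤[[z]] + W = 𝔤((z)) and 𝔤[[z]] ∩ W = 0. -/
open scoped TensorProduct
open Finset

/- We remove two instances that create (non-definitionally-equal) instance diamonds for
`LaurentSeries ℂ`, so that `ℂ((z))` carries its canonical `ℂ`-algebra structure
`HahnSeries.instAlgebra` and the induced `ℂ`-module structure. -/
attribute [-instance] HahnSeries.instModule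
attribute [-instance] HahnSeries.powerSeriesAlgebra

noncomputable section

/-- The field `ℂ((z))` of formal Laurent series. -/
abbrev Kz : Type := LaurentSeries ℂ

/-- The monomial `z^k ∈ ℂ((z))`. -/
def zm (k : ℤ) : Kz := HahnSeries.single k (1 : ℂ)

/-- Extraction of the `k`-th coefficient of a Laurent series, as a `ℂ`-linear map. -/
def coeffL (k : ℤ) : Kz →ₗ[ℂ] ℂ where
  toFun f := f.coeff k
  map_add' f g := by simp
  map_smul' c f := by
    show (c • f).coeff k = c • f.coeff k
    rw [HahnSeries.coeff_smul]

variable (L : Type*) [LieRing L] [LieAlgebra ℂ L]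

/-- The `k`-th coefficient of an element of `𝔤((z)) = ℂ((z)) ⊗ 𝔤`, as an element of `𝔤`. -/
def coeffT (k : ℤ) : (Kz ⊗[ℂ] L) →ₗ[ℂ] L :=
  (TensorProduct.lid ℂ L).toLinearMap ∘ₗ LinearMap.rTensor L (coeffL k)

/-- The subalgebra `𝔤[[z]] ⊆ 𝔤((z))`: elements with vanishing negative coefficients. -/
def gPow : Submodule ℂ (Kz ⊗[ℂ] L) :=
  ⨅ (k : ℤ) (_ : k < 0), LinearMap.ker (coeffT L k)

/-- The residue pairing `κ̄(f,g) = res₀(κ(f,g)dz)` on `𝔤((z))`: the coefficient of `z⁻¹`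
in the base-changed Killing form, so that `κ̄(a z^l, b z^k) = κ(a,b)` if `l+k = −1` and `0`
otherwise. -/
def KB (x y : Kz ⊗[ℂ] L) : ℂ :=
  (((killingForm ℂ L).baseChange Kz) x y).coeff (-1)

variable {L}

/-- The element `f_{k,l} = z^{−k−1} e_l + p_{k,l}(z)` of `𝔤((z))`, where the `𝔤`-valued
polynomial `p_{k,l}` is recorded by its finitely supported family of coefficients
`P k l : ℕ →₀ 𝔤`. -/
def fEl {d : ℕ} (e : Fin d → L) (P : ℕ → Fin d → ℕ →₀ L) (k : ℕ) (l : Fin d) :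
    Kz ⊗[ℂ] L :=
  zm (-(k : ℤ) - 1) ⊗ₜ[ℂ] e l + (P k l).sum fun m a => zm (m : ℤ) ⊗ₜ[ℂ] a

/-- `W ⊆ 𝔤((z))`: the `ℂ`-linear span of the elements `f_{k,l}`. -/
def Wsub {d : ℕ} (e : Fin d → L) (P : ℕ → Fin d → ℕ →₀ L) :
    Submodule ℂ (Kz ⊗[ℂ] L) :=
  Submodule.span ℂ {w | ∃ (k : ℕ) (l : Fin d), w = fEl e P k l}

/-- The polynomial `v(x,y) = Σ_{k=0}^{t} Σ_{l=1}^{d} p_{k,l}(y) ⊗ x^k e_l ∈ (𝔤⊗𝔤)[x,y]`. -/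
def vFun {d : ℕ} (t : ℕ) (e : Fin d → L) (P : ℕ → Fin d → ℕ →₀ L) (x y : ℂ) :
    L ⊗[ℂ] L :=
  ∑ k ∈ range (t + 1), ∑ l : Fin d,
    ((P k l).sum fun m a => y ^ m • a) ⊗ₜ[ℂ] (x ^ k • e l)

/-- The rational r-matrix `r(x,y) = γ/(y−x) + v(x,y)`, where `γ = Σ_l e_l ⊗ e_l`. -/
def rFun {d : ℕ} (t : ℕ) (e : Fin d → L) (P : ℕ → Fin d → ℕ →₀ L) (x y : ℂ) :
    L ⊗[ℂ] L :=
  (y - x)⁻¹ • (∑ l : Fin d, e l ⊗ₜ[ℂ] e l) + vFun t e P x y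

section Aux

variable {L : Type*} [LieRing L] [LieAlgebra ℂ L]

lemma coeffT_tmul (k : ℤ) (f : Kz) (a : L) :
    coeffT L k (f ⊗ₜ[ℂ] a) = f.coeff k • a := by
  simp [coeffT, coeffL]

lemma mem_gPow_iff (x : Kz ⊗[ℂ] L) :
    x ∈ gPow L ↔ ∀ k : ℤ, k < 0 → coeffT L k x = 0 := by
  simp [gPow, Submodule.mem_iInf, LinearMap.mem_ker]

lemma coeffT_poly_neg {d : ℕ} (P : ℕ → Fin d → ℕ →₀ L) (k : ℕ) (l : Fin d)
    {m : ℤ} (hm : m < 0) :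
    coeffT L m ((P k l).sum fun n a => zm (n : ℤ) ⊗ₜ[ℂ] a) = 0 := by
  rw [map_finsuppSum, Finsupp.sum]
  refine Finset.sum_eq_zero fun n _ => ?_
  rw [coeffT_tmul]
  have : (zm (n : ℤ)).coeff m = 0 := by
    rw [zm, HahnSeries.coeff_single]
    have : m ≠ (n : ℤ) := by omega
    simp [this]
  simp [this]

lemma coeffT_fEl {d : ℕ} (e : Fin d → L) (P : ℕ → Fin d → ℕ →₀ L) (k : ℕ) (l : Fin d)
    {m : ℤ} (hm : m < 0) :
    coeffT L m (fEl e P k l) = if m = -(k : ℤ) - 1 then e l else 0 := by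
  rw [fEl, map_add, coeffT_poly_neg P k l hm, add_zero, coeffT_tmul, zm,
    HahnSeries.coeff_single]
  split <;> simp

lemma zm_neg_mem {d : ℕ} (e : Module.Basis (Fin d) ℂ L) (P : ℕ → Fin d → ℕ →₀ L)
    (k : ℕ) (a : L) : zm (-(k : ℤ) - 1) ⊗ₜ[ℂ] a ∈ gPow L ⊔ Wsub ⇑e P := by
  have h1 : ∀ l : Fin d, zm (-(k : ℤ) - 1) ⊗ₜ[ℂ] (e l) ∈ gPow L ⊔ Wsub ⇑e P := by
    intro l
    have hf : fEl ⇑e P k l ∈ Wsub ⇑e P := Submodule.subset_span ⟨k, l, rfl⟩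
    have hp : ((P k l).sum fun m a => zm (m : ℤ) ⊗ₜ[ℂ] a) ∈ gPow L := by
      rw [mem_gPow_iff]
      intro j hj
      exact coeffT_poly_neg P k l hj
    have heq : zm (-(k : ℤ) - 1) ⊗ₜ[ℂ] (e l)
        = fEl ⇑e P k l - (P k l).sum fun m a => zm (m : ℤ) ⊗ₜ[ℂ] a := by
      rw [fEl]; abel
    rw [heq]
    rw [sub_eq_add_neg, ← neg_one_smul ℂ]
    exact Submodule.add_mem _ (Submodule.mem_sup_right (S := gPow L) hf)
      (Submodule.smul_mem _ _ (Submodule.mem_sup_left (T := Wsub ⇑e P) hp))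
  have ha := Module.Basis.sum_repr e a
  have key : zm (-(k : ℤ) - 1) ⊗ₜ[ℂ] a
      = ∑ i : Fin d, e.repr a i • (zm (-(k : ℤ) - 1) ⊗ₜ[ℂ] e i) := by
    conv_lhs => rw [← ha, TensorProduct.tmul_sum]
    refine Finset.sum_congr rfl fun i _ => ?_
    rw [TensorProduct.tmul_smul]
  rw [key]
  exact Submodule.sum_mem _ fun i _ => Submodule.smul_mem _ _ (h1 i)

lemma single_tmul_eq {m : ℤ} (c : ℂ) (a : L) :
    (HahnSeries.single m c : Kz) ⊗ₜ[ℂ] a = zm m ⊗ₜ[ℂ] (c • a) := by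
  rw [← TensorProduct.smul_tmul]
  congr 1
  ext k
  rw [HahnSeries.coeff_smul, HahnSeries.coeff_single, zm, HahnSeries.coeff_single]
  split <;> simp

lemma tmul_mem_sup {d : ℕ} (e : Module.Basis (Fin d) ℂ L) (P : ℕ → Fin d → ℕ →₀ L) :
    ∀ (N : ℕ) (f : Kz), (∀ k : ℤ, k < -(N : ℤ) → f.coeff k = 0) →
      ∀ a : L, f ⊗ₜ[ℂ] a ∈ gPow L ⊔ Wsub ⇑e P := by
  intro N
  induction N with
  | zero =>
    intro f hf a
    refine Submodule.mem_sup_left ?_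
    rw [mem_gPow_iff]
    intro k hk
    rw [coeffT_tmul, hf k (by exact_mod_cast hk), zero_smul]
  | succ N ih =>
    intro f hf a
    set c : ℂ := f.coeff (-(N : ℤ) - 1) with hc
    set g : Kz := f - HahnSeries.single (-(N : ℤ) - 1) c with hg
    have hgc : ∀ k : ℤ, k < -(N : ℤ) → g.coeff k = 0 := by
      intro k hk
      rw [hg, HahnSeries.coeff_sub, HahnSeries.coeff_single]
      rcases eq_or_lt_of_le (by omega : k ≤ -(N : ℤ) - 1) with h | h
      · simp [h, hc]
      · have hne : k ≠ -(N : ℤ) - 1 := by omega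
        rw [hf k (by push_cast; omega), if_neg hne]
        simp
    have hfeq : f ⊗ₜ[ℂ] a
        = g ⊗ₜ[ℂ] a + (HahnSeries.single (-(N : ℤ) - 1) c : Kz) ⊗ₜ[ℂ] a := by
      rw [hg, TensorProduct.sub_tmul]; abel
    rw [hfeq]
    refine add_mem (ih g hgc a) ?_
    rw [single_tmul_eq]
    exact zm_neg_mem e P N (c • a)

end Aux

/-- For a non-degenerate skew-symmetric rational solution
`r(x,y) = γ/(y−x) + v(x,y)` of the classical Yang–Baxter equation one has the direct sum
decomposition `𝔤((z)) = 𝔤[[z]] ∔ W`. -/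
theorem statement7
    (L : Type*) [LieRing L] [LieAlgebra ℂ L]
    [Module.Finite ℂ L] [LieAlgebra.IsSimple ℂ L]
    (d t : ℕ) (e : Module.Basis (Fin d) ℂ L)
    (horth : ∀ i j, killingForm ℂ L (e i) (e j) = if i = j then 1 else 0)
    (P : ℕ → Fin d → ℕ →₀ L)
    (hPtop : ∀ k l, t < k → P k l = 0)
    (hPdeg : t ≠ 0 → ∃ l, P t l ≠ 0)
    (B1213 B1223 B1323 :
      (L ⊗[ℂ] L) →ₗ[ℂ] (L ⊗[ℂ] L) →ₗ[ℂ] (L ⊗[ℂ] (L ⊗[ℂ] L)))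
    (hB1213 : ∀ a b c dd : L,
      B1213 (a ⊗ₜ[ℂ] b) (c ⊗ₜ[ℂ] dd) = ⁅a, c⁆ ⊗ₜ[ℂ] (b ⊗ₜ[ℂ] dd))
    (hB1223 : ∀ a b c dd : L,
      B1223 (a ⊗ₜ[ℂ] b) (c ⊗ₜ[ℂ] dd) = a ⊗ₜ[ℂ] (⁅b, c⁆ ⊗ₜ[ℂ] dd))
    (hB1323 : ∀ a b c dd : L,
      B1323 (a ⊗ₜ[ℂ] b) (c ⊗ₜ[ℂ] dd) = a ⊗ₜ[ℂ] (c ⊗ₜ[ℂ] ⁅b, dd⁆))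
    (hskew : ∀ x y : ℂ, x ≠ y →
      rFun t ⇑e P x y = - (TensorProduct.comm ℂ L L (rFun t ⇑e P y x)))
    (hCYBE : ∀ x₁ x₂ x₃ : ℂ, x₁ ≠ x₂ → x₁ ≠ x₃ → x₂ ≠ x₃ →
      B1213 (rFun t ⇑e P x₁ x₂) (rFun t ⇑e P x₁ x₃)
        + B1223 (rFun t ⇑e P x₁ x₂) (rFun t ⇑e P x₂ x₃)
        + B1323 (rFun t ⇑e P x₁ x₃) (rFun t ⇑e P x₂ x₃) = 0)
    :
    gPow L ⊔ Wsub ⇑e P = ⊤ ∧ gPow L ⊓ Wsub ⇑e P = ⊥ := by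
  constructor
  · -- surjectivity: 𝔤[[z]] + W = 𝔤((z))
    rw [eq_top_iff]
    rintro x -
    induction x using TensorProduct.induction_on with
    | zero => exact zero_mem _
    | tmul f a =>
      refine tmul_mem_sup e P ((-f.order).toNat) f (fun k hk => ?_) a
      refine HahnSeries.coeff_eq_zero_of_lt_order ?_
      have : -((-f.order).toNat : ℤ) ≤ f.order := by omega
      omega
    | add x y hx hy => exact add_mem hx hy
  · -- trivial intersection
    rw [eq_bot_iff]
    intro x hx
    obtain ⟨hg, hw⟩ := Submodule.mem_inf.mp hx
    have hrange : {w | ∃ (k : ℕ) (l : Fin d), w = fEl ⇑e P k l}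
        = Set.range (fun p : ℕ × Fin d => fEl ⇑e P p.1 p.2) := by
      ext w
      constructor
      · rintro ⟨k, l, rfl⟩; exact ⟨(k, l), rfl⟩
      · rintro ⟨⟨k, l⟩, rfl⟩; exact ⟨k, l, rfl⟩
    rw [Wsub, hrange, Finsupp.mem_span_range_iff_exists_finsupp] at hw
    obtain ⟨c, hc⟩ := hw
    -- show every coefficient c (k0, l0) vanishes
    have hczero : c = 0 := by
      ext p
      obtain ⟨k0, l0⟩ := p
      have hneg : (-(k0 : ℤ) - 1) < 0 := by omega
      have h0 : coeffT L (-(k0 : ℤ) - 1) x = 0 := (mem_gPow_iff x).mp hg _ hneg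
      have h1 : coeffT L (-(k0 : ℤ) - 1) x
          = c.sum fun p r => r • (if -(k0 : ℤ) - 1 = -(p.1 : ℤ) - 1
              then e p.2 else 0) := by
        rw [← hc, map_finsuppSum]
        refine Finsupp.sum_congr fun p _ => ?_
        rw [map_smul, coeffT_fEl ⇑e P p.1 p.2 hneg]
      have h2 : (e.repr (coeffT L (-(k0 : ℤ) - 1) x)) l0 = c (k0, l0) := by
        rw [h1, map_finsuppSum]
        have : (c.sum fun p r => (e.repr (r • (if -(k0 : ℤ) - 1 = -(p.1 : ℤ) - 1
            then e p.2 else 0))) l0)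
            = c.sum fun p r => if p = (k0, l0) then r else 0 := by
          refine Finsupp.sum_congr fun p _ => ?_
          rcases eq_or_ne p (k0, l0) with hp | hp
          · subst hp
            simp [Module.Basis.repr_self, Finsupp.single_apply]
          · rw [if_neg hp]
            by_cases h : -(k0 : ℤ) - 1 = -(p.1 : ℤ) - 1
            · have hk : p.1 = k0 := by omega
              have hl : p.2 ≠ l0 := by
                intro hl
                exact hp (Prod.ext hk hl)
              simp [h, Module.Basis.repr_self, Finsupp.single_apply, hl]
            · simp [h, hc]
        rw [Finsupp.sum_apply, this,
          Finsupp.sum_ite_eq' c (k0, l0) fun _ r => r]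
        split
        · rfl
        · next h => exact (Finsupp.notMem_support_iff.mp h).symm
      rw [h0] at h2
      simp at h2
      exact h2.symm
    rw [hczero, Finsupp.sum_zero_index] at hc
    simpa [Submodule.mem_bot] using hc.symm

end
end

section
/- Let 𝔤 be a finite-dimensional complex simple Lie algebra with Casimir element γ, let v ∈ (𝔤⊗𝔤)[x,y] be a polynomial, and set r(x,y) = γ/(y−x) + v(x,y) for x ≠ y. Then for every polynomial f ∈ 𝔤[z] there exists a polynomial w ∈ (𝔤⊗𝔤)[x,y] such that for all x ≠ y in ℂ one has ad₁(f(x))(r(x,y)) + ad₂(f(y))(r(x,y)) = w(x,y); that is, the cobracket θ(f)(x,y) = [f(x)⊗1 + 1⊗f(y), r(x,y)] has no pole along the diagonal and is polynomial. -/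
open scoped TensorProduct
open Finset

section Aux
variable {T : Type*} [AddCommGroup T] [Module ℂ T]

private def IsPoly2 (w : ℂ → ℂ → T) : Prop :=
  ∃ (N : ℕ) (C : ℕ → ℕ → T), ∀ x y : ℂ,
    w x y = ∑ i ∈ range (N + 1), ∑ j ∈ range (N + 1), (x ^ i * y ^ j) • C i j

private lemma isPoly2_congr {w w' : ℂ → ℂ → T} (h : ∀ x y, w x y = w' x y)
    (h' : IsPoly2 w') : IsPoly2 w := by
  obtain ⟨N, C, hC⟩ := h'
  exact ⟨N, C, fun x y => (h x y).trans (hC x y)⟩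

private lemma isPoly2_zero : IsPoly2 (fun _ _ : ℂ => (0 : T)) :=
  ⟨0, fun _ _ => 0, by simp⟩

private lemma isPoly2_pad {N N' : ℕ} (h : N ≤ N') (C : ℕ → ℕ → T) (x y : ℂ) :
    ∑ i ∈ range (N + 1), ∑ j ∈ range (N + 1), (x ^ i * y ^ j) • C i j
      = ∑ i ∈ range (N' + 1), ∑ j ∈ range (N' + 1), (x ^ i * y ^ j) •
          (if i ≤ N ∧ j ≤ N then C i j else 0) := by
  calc ∑ i ∈ range (N + 1), ∑ j ∈ range (N + 1), (x ^ i * y ^ j) • C i j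
      = ∑ i ∈ range (N + 1), ∑ j ∈ range (N + 1), (x ^ i * y ^ j) •
          (if i ≤ N ∧ j ≤ N then C i j else 0) := by
        refine sum_congr rfl fun i hi => sum_congr rfl fun j hj => ?_
        simp only [mem_range] at hi hj
        rw [if_pos ⟨by omega, by omega⟩]
    _ = ∑ i ∈ range (N + 1), ∑ j ∈ range (N' + 1), (x ^ i * y ^ j) •
          (if i ≤ N ∧ j ≤ N then C i j else 0) := by
        refine sum_congr rfl fun i hi => Finset.sum_subset
          (range_subset_range.mpr (by omega)) fun j hj hj' => ?_
        simp only [mem_range, not_lt] at hj hj'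
        rw [if_neg (by omega), smul_zero]
    _ = _ := by
        refine Finset.sum_subset (range_subset_range.mpr (by omega)) fun i hi hi' => ?_
        simp only [mem_range, not_lt] at hi hi'
        exact Finset.sum_eq_zero fun j _ => by rw [if_neg (by omega), smul_zero]

private lemma isPoly2_add {w₁ w₂ : ℂ → ℂ → T} (h₁ : IsPoly2 w₁) (h₂ : IsPoly2 w₂) :
    IsPoly2 (fun x y => w₁ x y + w₂ x y) := by
  obtain ⟨N₁, C₁, hC₁⟩ := h₁
  obtain ⟨N₂, C₂, hC₂⟩ := h₂
  refine ⟨max N₁ N₂, fun i j => (if i ≤ N₁ ∧ j ≤ N₁ then C₁ i j else 0)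
    + (if i ≤ N₂ ∧ j ≤ N₂ then C₂ i j else 0), fun x y => ?_⟩
  dsimp only
  rw [hC₁, hC₂, isPoly2_pad (le_max_left N₁ N₂) C₁, isPoly2_pad (le_max_right N₁ N₂) C₂]
  simp [smul_add, Finset.sum_add_distrib]

private lemma isPoly2_sum {ι : Type*} (S : Finset ι) (g : ι → ℂ → ℂ → T)
    (h : ∀ s ∈ S, IsPoly2 (g s)) : IsPoly2 (fun x y => ∑ s ∈ S, g s x y) := by
  classical
  induction S using Finset.induction with
  | empty => exact isPoly2_congr (by simp) isPoly2_zero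
  | @insert a s hs ih =>
    exact isPoly2_congr (fun x y => Finset.sum_insert hs)
      (isPoly2_add (h a (mem_insert_self a s)) (ih fun b hb => h b (mem_insert_of_mem hb)))

private lemma isPoly2_monomial (a b : ℕ) (t : T) :
    IsPoly2 (fun x y : ℂ => (x ^ a * y ^ b) • t) := by
  refine ⟨a + b, fun i j => if i = a ∧ j = b then t else 0, fun x y => ?_⟩
  have ha : a ∈ range (a + b + 1) := by simp only [mem_range]; omega
  have hb : b ∈ range (a + b + 1) := by simp only [mem_range]; omega
  rw [Finset.sum_eq_single_of_mem a ha, Finset.sum_eq_single_of_mem b hb]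
  · simp
  · intro j _ hj; dsimp only; rw [if_neg (by tauto), smul_zero]
  · intro i _ hi
    exact Finset.sum_eq_zero fun j _ => by
      dsimp only; rw [if_neg (by tauto), smul_zero]

end Aux

section LieAux

variable (L : Type*) [LieRing L] [LieAlgebra ℂ L] [Module.Finite ℂ L]

omit [Module.Finite ℂ L] in
private lemma casimir_inv
    (d : ℕ) (e : Module.Basis (Fin d) ℂ L)
    (horth : ∀ i j, killingForm ℂ L (e i) (e j) = if i = j then 1 else 0)
    (c : L) :
    LinearMap.rTensor L (LieAlgebra.ad ℂ L c) (∑ l : Fin d, e l ⊗ₜ[ℂ] e l)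
      + LinearMap.lTensor L (LieAlgebra.ad ℂ L c) (∑ l : Fin d, e l ⊗ₜ[ℂ] e l) = 0 := by
  have key : ∀ a : L, a = ∑ m : Fin d, killingForm ℂ L a (e m) • e m := by
    intro a
    conv_lhs => rw [← e.sum_repr a]
    refine Finset.sum_congr rfl fun m _ => ?_
    congr 1
    conv_rhs => rw [← e.sum_repr a]
    simp only [map_sum, map_smul, LinearMap.sum_apply, LinearMap.smul_apply, horth,
      smul_eq_mul, mul_ite, mul_one, mul_zero]
    rw [Finset.sum_ite_eq' univ m (fun i => e.repr a i)]
    simp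
  have skew : ∀ l m : Fin d,
      killingForm ℂ L ⁅c, e l⁆ (e m) + killingForm ℂ L ⁅c, e m⁆ (e l) = 0 := by
    intro l m
    rw [LieModule.traceForm_apply_lie_apply, LieModule.traceForm_apply_lie_apply,
      ← lie_skew (e l) (e m), map_neg]
    simp
  simp only [map_sum, LinearMap.rTensor_tmul, LinearMap.lTensor_tmul]
  have h1 : ∀ l : Fin d, (LieAlgebra.ad ℂ L c) (e l) ⊗ₜ[ℂ] e l
      = ∑ m : Fin d, killingForm ℂ L ⁅c, e l⁆ (e m) • (e m ⊗ₜ[ℂ] e l) := by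
    intro l
    rw [LieAlgebra.ad_apply]
    conv_lhs => rw [key ⁅c, e l⁆]
    rw [TensorProduct.sum_tmul]
    exact Finset.sum_congr rfl fun m _ => by rw [TensorProduct.smul_tmul']
  have h2 : ∀ l : Fin d, e l ⊗ₜ[ℂ] (LieAlgebra.ad ℂ L c) (e l)
      = ∑ m : Fin d, killingForm ℂ L ⁅c, e l⁆ (e m) • (e l ⊗ₜ[ℂ] e m) := by
    intro l
    rw [LieAlgebra.ad_apply]
    conv_lhs => rw [key ⁅c, e l⁆]
    rw [TensorProduct.tmul_sum]
    exact Finset.sum_congr rfl fun m _ => by rw [TensorProduct.tmul_smul]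
  simp only [h1, h2]
  rw [Finset.sum_comm (γ := Fin d) (s := univ) (t := univ)
    (f := fun l m => killingForm ℂ L ⁅c, e l⁆ (e m) • (e l ⊗ₜ[ℂ] e m))]
  rw [← Finset.sum_add_distrib]
  refine Finset.sum_eq_zero fun l _ => ?_
  rw [← Finset.sum_add_distrib]
  refine Finset.sum_eq_zero fun m _ => ?_
  rw [← add_smul]
  rw [show killingForm ℂ L ⁅c, e l⁆ (e m) + killingForm ℂ L ⁅c, e m⁆ (e l) = 0 from skew l m,
    zero_smul]

private lemma lT_ad_sum {ι : Type*} (S : Finset ι) (c : ι → ℂ) (F : ι → L) (t : L ⊗[ℂ] L) :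
    LinearMap.lTensor L (LieAlgebra.ad ℂ L (∑ m ∈ S, c m • F m)) t
      = ∑ m ∈ S, c m • LinearMap.lTensor L (LieAlgebra.ad ℂ L (F m)) t := by
  classical
  induction S using Finset.induction with
  | empty => simp
  | @insert a s ha ih =>
    rw [Finset.sum_insert ha, Finset.sum_insert ha, map_add, map_smul,
      LinearMap.lTensor_add, LinearMap.lTensor_smul, LinearMap.add_apply,
      LinearMap.smul_apply, ih]

private lemma rT_ad_sum {ι : Type*} (S : Finset ι) (c : ι → ℂ) (F : ι → L) (t : L ⊗[ℂ] L) :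
    LinearMap.rTensor L (LieAlgebra.ad ℂ L (∑ m ∈ S, c m • F m)) t
      = ∑ m ∈ S, c m • LinearMap.rTensor L (LieAlgebra.ad ℂ L (F m)) t := by
  classical
  induction S using Finset.induction with
  | empty => simp
  | @insert a s ha ih =>
    rw [Finset.sum_insert ha, Finset.sum_insert ha, map_add, map_smul,
      LinearMap.rTensor_add, LinearMap.rTensor_smul, LinearMap.add_apply,
      LinearMap.smul_apply, ih]

end LieAux

/-- For a finite-dimensional complex simple Lie algebra `𝔤` with Casimir
element `γ`, a polynomial `v ∈ (𝔤⊗𝔤)[x,y]` and `r(x,y) = γ/(y−x) + v(x,y)`, the cobracket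
`θ(f)(x,y) = [f(x)⊗1 + 1⊗f(y), r(x,y)]` of every polynomial `f ∈ 𝔤[z]` has no pole along
the diagonal: it is given by a polynomial `w ∈ (𝔤⊗𝔤)[x,y]`.
Here `ad₁(c) = c ⨁ 0` acts on the first tensor factor (`LinearMap.rTensor`) and
`ad₂(c)` on the second one (`LinearMap.lTensor`). -/
theorem statement15
    (L : Type*) [LieRing L] [LieAlgebra ℂ L]
    [Module.Finite ℂ L] [LieAlgebra.IsSimple ℂ L]
    (d : ℕ) (e : Module.Basis (Fin d) ℂ L)
    (horth : ∀ i j, killingForm ℂ L (e i) (e j) = if i = j then 1 else 0)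
    (Nv : ℕ) (V : ℕ → ℕ → L ⊗[ℂ] L)
    (v : ℂ → ℂ → L ⊗[ℂ] L)
    (hv : ∀ x y : ℂ, v x y =
      ∑ i ∈ range (Nv + 1), ∑ j ∈ range (Nv + 1), (x ^ i * y ^ j) • V i j)
    (r : ℂ → ℂ → L ⊗[ℂ] L)
    (hr : ∀ x y : ℂ, r x y = (y - x)⁻¹ • (∑ l : Fin d, e l ⊗ₜ[ℂ] e l) + v x y)
    (M : ℕ) (F : ℕ → L)
    (f : ℂ → L)
    (hf : ∀ x : ℂ, f x = ∑ m ∈ range (M + 1), x ^ m • F m) :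
    ∃ (Nw : ℕ) (C : ℕ → ℕ → L ⊗[ℂ] L),
      ∀ x y : ℂ, x ≠ y →
        LinearMap.rTensor L (LieAlgebra.ad ℂ L (f x)) (r x y)
            + LinearMap.lTensor L (LieAlgebra.ad ℂ L (f y)) (r x y)
          = ∑ i ∈ range (Nw + 1), ∑ j ∈ range (Nw + 1), (x ^ i * y ^ j) • C i j := by
  set γ : L ⊗[ℂ] L := ∑ l : Fin d, e l ⊗ₜ[ℂ] e l with hγ
  -- the explicit polynomial
  set W : ℂ → ℂ → L ⊗[ℂ] L := fun x y =>
    (∑ m ∈ range (M + 1), ∑ k ∈ range m,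
        (x ^ (m - 1 - k) * y ^ k) • LinearMap.lTensor L (LieAlgebra.ad ℂ L (F m)) γ)
    + ((∑ m ∈ range (M + 1), ∑ i ∈ range (Nv + 1), ∑ j ∈ range (Nv + 1),
          (x ^ (m + i) * y ^ j) • LinearMap.rTensor L (LieAlgebra.ad ℂ L (F m)) (V i j))
      + (∑ m ∈ range (M + 1), ∑ i ∈ range (Nv + 1), ∑ j ∈ range (Nv + 1),
          (x ^ i * y ^ (j + m)) • LinearMap.lTensor L (LieAlgebra.ad ℂ L (F m)) (V i j)))
    with hW
  have hWpoly : IsPoly2 W := by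
    refine isPoly2_add ?_ (isPoly2_add ?_ ?_)
    · exact isPoly2_sum _ _ fun m _ => isPoly2_sum _ _ fun k _ => isPoly2_monomial _ _ _
    · exact isPoly2_sum _ _ fun m _ => isPoly2_sum _ _ fun i _ =>
        isPoly2_sum _ _ fun j _ => isPoly2_monomial _ _ _
    · exact isPoly2_sum _ _ fun m _ => isPoly2_sum _ _ fun i _ =>
        isPoly2_sum _ _ fun j _ => isPoly2_monomial _ _ _
  obtain ⟨N, C, hC⟩ := hWpoly
  refine ⟨N, C, fun x y hxy => ?_⟩
  rw [← hC x y]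
  have hyx : y - x ≠ 0 := sub_ne_zero.mpr (Ne.symm hxy)
  -- expand r
  rw [hr x y, map_add, map_add, map_smul, map_smul]
  -- the singular part
  have hsing : (y - x)⁻¹ • (LinearMap.rTensor L (LieAlgebra.ad ℂ L (f x)) γ)
      + (y - x)⁻¹ • (LinearMap.lTensor L (LieAlgebra.ad ℂ L (f y)) γ)
      = ∑ m ∈ range (M + 1), ∑ k ∈ range m,
          (x ^ (m - 1 - k) * y ^ k) • LinearMap.lTensor L (LieAlgebra.ad ℂ L (F m)) γ := by
    have hc : LinearMap.rTensor L (LieAlgebra.ad ℂ L (f x)) γ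
        = - LinearMap.lTensor L (LieAlgebra.ad ℂ L (f x)) γ :=
      eq_neg_of_add_eq_zero_left (casimir_inv L d e horth (f x))
    rw [hc, ← smul_add, neg_add_eq_sub]
    have hfy : LinearMap.lTensor L (LieAlgebra.ad ℂ L (f y)) γ
        = ∑ m ∈ range (M + 1), y ^ m • LinearMap.lTensor L (LieAlgebra.ad ℂ L (F m)) γ := by
      rw [hf y]; exact lT_ad_sum L _ _ _ _
    have hfx : LinearMap.lTensor L (LieAlgebra.ad ℂ L (f x)) γ
        = ∑ m ∈ range (M + 1), x ^ m • LinearMap.lTensor L (LieAlgebra.ad ℂ L (F m)) γ := by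
      rw [hf x]; exact lT_ad_sum L _ _ _ _
    rw [hfy, hfx, ← Finset.sum_sub_distrib, Finset.smul_sum]
    refine Finset.sum_congr rfl fun m _ => ?_
    rw [← sub_smul, smul_smul]
    have hgeom : (y - x)⁻¹ * (y ^ m - x ^ m)
        = ∑ k ∈ range m, y ^ k * x ^ (m - 1 - k) := by
      rw [← geom_sum₂_mul y x m, mul_comm ((y - x)⁻¹), mul_assoc,
        mul_inv_cancel₀ hyx, mul_one]
    rw [hgeom, Finset.sum_smul]
    exact Finset.sum_congr rfl fun k _ => by rw [mul_comm (y ^ k)]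
  -- the polynomial parts
  have hpol1 : LinearMap.rTensor L (LieAlgebra.ad ℂ L (f x)) (v x y)
      = ∑ m ∈ range (M + 1), ∑ i ∈ range (Nv + 1), ∑ j ∈ range (Nv + 1),
          (x ^ (m + i) * y ^ j) • LinearMap.rTensor L (LieAlgebra.ad ℂ L (F m)) (V i j) := by
    rw [hf x, rT_ad_sum L _ _ _ _]
    refine Finset.sum_congr rfl fun m _ => ?_
    rw [hv x y, map_sum, Finset.smul_sum]
    refine Finset.sum_congr rfl fun i _ => ?_
    rw [map_sum, Finset.smul_sum]
    refine Finset.sum_congr rfl fun j _ => ?_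
    rw [map_smul, smul_smul]
    congr 1
    ring
  have hpol2 : LinearMap.lTensor L (LieAlgebra.ad ℂ L (f y)) (v x y)
      = ∑ m ∈ range (M + 1), ∑ i ∈ range (Nv + 1), ∑ j ∈ range (Nv + 1),
          (x ^ i * y ^ (j + m)) • LinearMap.lTensor L (LieAlgebra.ad ℂ L (F m)) (V i j) := by
    rw [hf y, lT_ad_sum L _ _ _ _]
    refine Finset.sum_congr rfl fun m _ => ?_
    rw [hv x y, map_sum, Finset.smul_sum]
    refine Finset.sum_congr rfl fun i _ => ?_
    rw [map_sum, Finset.smul_sum]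
    refine Finset.sum_congr rfl fun j _ => ?_
    rw [map_smul, smul_smul]
    congr 1
    ring
  rw [hW]
  dsimp only
  rw [← hsing, hpol1, hpol2]
  abel
end

section
/- Let 𝔤 = 𝔰𝔩₂(ℂ) with standard basis h, e, f. Baxter's trigonometric solution ρ(z) = (cos z/(2 sin z))·h⊗h + (1/ sin z)·(e⊗f + f⊗e) satisfies the classical Yang–Baxter equation with one spectral parameter: for all x, y ∈ ℂ with sin x ≠ 0, sin y ≠ 0 and sin(x+y) ≠ 0, one has [ρ(x), ρ(x+y)]^{12,13} + [ρ(x+y), ρ(y)]^{13,23} + [ρ(x), ρ(y)]^{12,23} = 0. -/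
open scoped TensorProduct
open Matrix

noncomputable section

/-- The Lie algebra of `2 × 2` complex matrices (ambient algebra of `𝔰𝔩₂(ℂ)`). -/
abbrev M2 : Type := Matrix (Fin 2) (Fin 2) ℂ

/-- `h = e₁₁ - e₂₂`. -/
def hM : M2 := single 0 0 1 - single 1 1 1

/-- `e = e₁₂`. -/
def eM : M2 := single 0 1 1

/-- `f = e₂₁`. -/
def fM : M2 := single 1 0 1

/-- Baxter's trigonometric solution
`ρ(z) = (cos z/(2 sin z))·h⊗h + (1/sin z)·(e⊗f + f⊗e)` for `𝔰𝔩₂(ℂ)`. -/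
def ρBaxter (z : ℂ) : M2 ⊗[ℂ] M2 :=
  (Complex.cos z / (2 * Complex.sin z)) • (hM ⊗ₜ[ℂ] hM)
    + (Complex.sin z)⁻¹ • (eM ⊗ₜ[ℂ] fM + fM ⊗ₜ[ℂ] eM)

section

attribute [local instance 100] LieRing.ofAssociativeRing
attribute [local instance 100] LieAlgebra.ofAssociativeAlgebra

lemma lie_he : ⁅hM, eM⁆ = (2:ℂ) • eM := by
  ext i j; fin_cases i <;> fin_cases j <;>
    simp [hM, eM, Ring.lie_def, Matrix.mul_apply, Fin.sum_univ_succ, Matrix.single_apply] <;> norm_num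

lemma lie_hf : ⁅hM, fM⁆ = (-2:ℂ) • fM := by
  ext i j; fin_cases i <;> fin_cases j <;>
    simp [hM, fM, Ring.lie_def, Matrix.mul_apply, Fin.sum_univ_succ, Matrix.single_apply] <;> norm_num

lemma lie_ef : ⁅eM, fM⁆ = hM := by
  ext i j; fin_cases i <;> fin_cases j <;>
    simp [hM, eM, fM, Ring.lie_def, Matrix.mul_apply, Fin.sum_univ_succ, Matrix.single_apply]

lemma lie_eh : ⁅eM, hM⁆ = (-2:ℂ) • eM := by rw [← lie_skew, lie_he]; module

lemma lie_fh : ⁅fM, hM⁆ = (2:ℂ) • fM := by rw [← lie_skew, lie_hf]; module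

lemma lie_fe : ⁅fM, eM⁆ = -hM := by rw [← lie_skew, lie_ef]

lemma key (B1213 B1223 B1323 :
      (M2 ⊗[ℂ] M2) →ₗ[ℂ] (M2 ⊗[ℂ] M2) →ₗ[ℂ] (M2 ⊗[ℂ] (M2 ⊗[ℂ] M2)))
    (hB1213 : ∀ a b c d : M2,
      B1213 (a ⊗ₜ[ℂ] b) (c ⊗ₜ[ℂ] d) = ⁅a, c⁆ ⊗ₜ[ℂ] (b ⊗ₜ[ℂ] d))
    (hB1223 : ∀ a b c d : M2,
      B1223 (a ⊗ₜ[ℂ] b) (c ⊗ₜ[ℂ] d) = a ⊗ₜ[ℂ] (⁅b, c⁆ ⊗ₜ[ℂ] d))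
    (hB1323 : ∀ a b c d : M2,
      B1323 (a ⊗ₜ[ℂ] b) (c ⊗ₜ[ℂ] d) = a ⊗ₜ[ℂ] (c ⊗ₜ[ℂ] ⁅b, d⁆))
    (p q P Q r s : ℂ)
    (h1 : 2*Q*(p+r) = q*s) (h2 : 2*s*(p-P) = q*Q) (h3 : 2*q*(r-P) = Q*s) :
    B1213 (p • (hM ⊗ₜ[ℂ] hM) + q • (eM ⊗ₜ[ℂ] fM + fM ⊗ₜ[ℂ] eM))
        (P • (hM ⊗ₜ[ℂ] hM) + Q • (eM ⊗ₜ[ℂ] fM + fM ⊗ₜ[ℂ] eM))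
      + B1323 (P • (hM ⊗ₜ[ℂ] hM) + Q • (eM ⊗ₜ[ℂ] fM + fM ⊗ₜ[ℂ] eM))
        (r • (hM ⊗ₜ[ℂ] hM) + s • (eM ⊗ₜ[ℂ] fM + fM ⊗ₜ[ℂ] eM))
      + B1223 (p • (hM ⊗ₜ[ℂ] hM) + q • (eM ⊗ₜ[ℂ] fM + fM ⊗ₜ[ℂ] eM))
        (r • (hM ⊗ₜ[ℂ] hM) + s • (eM ⊗ₜ[ℂ] fM + fM ⊗ₜ[ℂ] eM)) = 0 := by
  simp only [map_add, _root_.map_smul, LinearMap.add_apply, LinearMap.smul_apply,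
    hB1213, hB1223, hB1323, lie_he, lie_hf, lie_ef, lie_eh, lie_fh, lie_fe, lie_self,
    smul_lie, lie_smul,
    TensorProduct.zero_tmul, TensorProduct.tmul_zero, TensorProduct.smul_tmul,
    TensorProduct.tmul_smul, TensorProduct.tmul_neg, TensorProduct.neg_tmul,
    smul_add, smul_neg, smul_smul, add_zero, zero_add, smul_zero]
  match_scalars <;>
    first
    | linear_combination h1 | linear_combination -h1
    | linear_combination h2 | linear_combination -h2
    | linear_combination h3 | linear_combination -h3
    | ring

end

/-- Baxter's trigonometric solution satisfies the classical Yang–Baxter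
equation with one spectral parameter. -/
theorem statement16
    (B1213 B1223 B1323 :
      (M2 ⊗[ℂ] M2) →ₗ[ℂ] (M2 ⊗[ℂ] M2) →ₗ[ℂ] (M2 ⊗[ℂ] (M2 ⊗[ℂ] M2)))
    (hB1213 : ∀ a b c d : M2,
      B1213 (a ⊗ₜ[ℂ] b) (c ⊗ₜ[ℂ] d) = ⁅a, c⁆ ⊗ₜ[ℂ] (b ⊗ₜ[ℂ] d))
    (hB1223 : ∀ a b c d : M2,
      B1223 (a ⊗ₜ[ℂ] b) (c ⊗ₜ[ℂ] d) = a ⊗ₜ[ℂ] (⁅b, c⁆ ⊗ₜ[ℂ] d))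
    (hB1323 : ∀ a b c d : M2,
      B1323 (a ⊗ₜ[ℂ] b) (c ⊗ₜ[ℂ] d) = a ⊗ₜ[ℂ] (c ⊗ₜ[ℂ] ⁅b, d⁆))
    :
    ∀ x y : ℂ, Complex.sin x ≠ 0 → Complex.sin y ≠ 0 → Complex.sin (x + y) ≠ 0 →
      B1213 (ρBaxter x) (ρBaxter (x + y)) + B1323 (ρBaxter (x + y)) (ρBaxter y)
        + B1223 (ρBaxter x) (ρBaxter y) = 0 := by
  intro x y hx hy hxy
  unfold ρBaxter
  apply key B1213 B1223 B1323 hB1213 hB1223 hB1323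
  · field_simp
    rw [Complex.sin_add]
    ring
  · have e2 : Complex.sin y
        = Complex.sin (x+y) * Complex.cos x - Complex.cos (x+y) * Complex.sin x := by
      rw [← Complex.sin_sub]; congr 1; ring
    field_simp
    linear_combination -e2
  · have e3 : Complex.sin x
        = Complex.sin (x+y) * Complex.cos y - Complex.cos (x+y) * Complex.sin y := by
      rw [← Complex.sin_sub]; congr 1; ring
    field_simp
    linear_combination -e3

end
end
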